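/- Let f = p_1(λ_1 x + μ_1 y) and g = p_2(λ_2 x + μ_2 y) be integer-linear polynomials in K[x,y], where p_1, p_2 ∈ K[z] have positive degree, λ_i, μ_i are integers with μ_i > 0 and gcd(λ_i, μ_i) = 1. Then f ∼_{x,y} g if and only if (λ_1, μ_1) = (λ_2, μ_2) and p_1(z) = p_2(z + ℓ) for some integer ℓ. -/

import Mathlib

open Polynomial BigOperators

noncomputable section

/-- The shift automorphism `X ↦ X + 1` of a polynomial ring. -/
def shiftPoly (A : Type*) [CommRing A] : Polynomial A ≃ₐ[A] Polynomial A :=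
  AlgEquiv.ofAlgHom (aeval (X + 1)) (aeval (X - 1))
    (by apply algHom_ext; simp) (by apply algHom_ext; simp)

variable (K : Type*) [Field K] [CharZero K]

/-- `K[x,y]` modelled as `K[x][y]`: the inner variable is `x`, the outer one is `y`. -/
abbrev Rxy := Polynomial (Polynomial K)

/-- The rational function field `K(x,y)`, as the fraction field of `K[x][y]`. -/
abbrev Fxy := FractionRing (Rxy K)

/-- The shift `x ↦ x + 1` on `K[x]`. -/
def σxK : RingAut (Polynomial K) := (shiftPoly K).toRingEquiv

/-- The shift `x ↦ x + 1` on `K[x,y]`. -/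
def σxR : RingAut (Rxy K) := mapEquiv (shiftPoly K).toRingEquiv

/-- The shift `y ↦ y + 1` on `K[x,y]`. -/
def σyR : RingAut (Rxy K) := (shiftPoly (Polynomial K)).toRingEquiv

/-- The shift `σ_x` on `K(x,y)`. -/
def σxF : RingAut (Fxy K) := IsFractionRing.ringEquivOfRingEquiv (σxR K)

/-- The shift `σ_y` on `K(x,y)`. -/
def σyF : RingAut (Fxy K) := IsFractionRing.ringEquivOfRingEquiv (σyR K)

/-- The canonical map `K[x,y] → K(x,y)`. -/
def ι₀ : Rxy K →+* Fxy K := algebraMap (Rxy K) (Fxy K)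

/-- The canonical map `K[x] → K(x,y)`. -/
def ιx₀ : Polynomial K →+* Fxy K := (ι₀ K).comp (Polynomial.C : Polynomial K →+* Rxy K)

/-- The canonical map `K → K(x,y)`. -/
def ιK : K →+* Fxy K := (ιx₀ K).comp (Polynomial.C : K →+* Polynomial K)

/-- The element `x` of `K(x,y)`. -/
def xF : Fxy K := ιx₀ K X

/-- The element `y` of `K(x,y)`. -/
def yF : Fxy K := ι₀ K X

/-- A rational function `f ∈ K(x,y)` is `σ_y`-summable if `f = σ_y(g) - g`
for some `g ∈ K(x,y)`. -/
def IsSummableY (f : Fxy K) : Prop := ∃ g : Fxy K, f = σyF K g - g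

/-- The Laurent operator ring `A = K(x,y)[S_x,S_y,S_x⁻¹,S_y⁻¹]`, an operator being
recorded by its (finitely supported) family of coefficients `a_{ij}` in
`L = Σ a_{ij} S_x^i S_y^j`. -/
abbrev OpA := (ℤ × ℤ) →₀ Fxy K

/-- The subring `A_{λ,μ} = K(x,y)[S_{λ,μ}, S_{λ,μ}⁻¹]`, an operator being recorded by its
(finitely supported) family of coefficients `a_i` in `M = Σ a_i S_{λ,μ}^i`. -/
abbrev OpB := ℤ →₀ Fxy K

/-- The automorphism `σ_x^i σ_y^j` of `K(x,y)` attached to the monomial `S_x^i S_y^j`. -/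
def σv (v : ℤ × ℤ) : RingAut (Fxy K) := σxF K ^ v.1 * σyF K ^ v.2

/-- Multiplication in `A`, determined by the commutation rule `S_x^i S_y^j f
= σ_x^i σ_y^j (f) S_x^i S_y^j`. -/
def mulA (L M : OpA K) : OpA K :=
  L.sum fun p a => M.sum fun q b => Finsupp.single (p + q) (a * σv K p b)

/-- The application of an operator `L = Σ a_{ij} S_x^i S_y^j ∈ A` to a rational function. -/
def applyA (L : OpA K) (f : Fxy K) : Fxy K := L.sum fun p a => a * σv K p f

/-- The operator `S_y - 1 ∈ A`. -/
def SyOne : OpA K :=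
  Finsupp.single ((0 : ℤ), (1 : ℤ)) (1 : Fxy K) - Finsupp.single ((0 : ℤ), (0 : ℤ)) (1 : Fxy K)

section TypeLamMu

/- `α`, `β` are the Bézout cofactors for the integer-linear type `(λ, μ)`,
so that `S_{λ,μ} = S_x^α S_y^β`. -/
variable (α β : ℤ)

/-- The automorphism `σ_{λ,μ} = σ_x^α σ_y^β` of `K(x,y)` attached to `S_{λ,μ} = S_x^α S_y^β`. -/
def τF : RingAut (Fxy K) := σxF K ^ α * σyF K ^ β

/-- Multiplication in `A_{λ,μ}`. -/
def mulB (L M : OpB K) : OpB K :=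
  L.sum fun i a => M.sum fun j b => Finsupp.single (i + j) (a * (τF K α β ^ i) b)

/-- The application of an operator `M = Σ a_i S_{λ,μ}^i ∈ A_{λ,μ}` to a rational function. -/
def applyB (M : OpB K) (f : Fxy K) : Fxy K := M.sum fun i a => a * (τF K α β ^ i) f

/-- The inclusion `A_{λ,μ} ⊆ A`, sending `S_{λ,μ}^k` to `S_x^{kα} S_y^{kβ}`. -/
def ιB (M : OpB K) : OpA K := Finsupp.mapDomain (fun k : ℤ => (k * α, k * β)) M

/-- The left `K(x,y)`-linear map `φ_{λ,μ} : A → A_{λ,μ}`,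
sending `Σ a_{ij} S_x^i S_y^j` to `Σ a_{ij} S_{λ,μ}^{iλ+jμ}`. -/
def φB (lam μ : ℤ) (L : OpA K) : OpB K :=
  Finsupp.mapDomain (fun p : ℤ × ℤ => p.1 * lam + p.2 * μ) L

/-- The left scalar multiplication `L ⊙ M = φ_{λ,μ}(L M)` of `L ∈ A` on `M ∈ A_{λ,μ}`. -/
def odot (lam μ : ℤ) (L : OpA K) (M : OpB K) : OpB K :=
  φB K lam μ (mulA K L (ιB K α β M))

end TypeLamMu

/-- The lowest order `lord(M)` of a (nonzero) operator `M ∈ A_{λ,μ}`. -/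
def lord (M : OpB K) : ℤ := WithTop.untopD 0 (M.support.min)

/-- The highest order `hord(M)` of a (nonzero) operator `M ∈ A_{λ,μ}`. -/
def hord (M : OpB K) : ℤ := WithBot.unbotD 0 (M.support.max)

/-- The inclusion `K(x,y)[S_y, S_y⁻¹] ⊆ A`. -/
def ιy (L : ℤ →₀ Fxy K) : OpA K := Finsupp.mapDomain (fun j : ℤ => ((0 : ℤ), j)) L

/-- The inclusion `K[x][S_x] ⊆ A`, for operators with polynomial coefficients
supported on nonnegative powers of `S_x`. -/
def ιxOp (L : ℕ →₀ Polynomial K) : OpA K :=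
  L.sum fun ℓ c => Finsupp.single ((ℓ : ℤ), (0 : ℤ)) (ιx₀ K c)

/-- A nonzero operator `L = Σ c_ℓ S_x^ℓ ∈ K[x][S_x]` is a telescoper for `f ∈ K(x,y)`
if `L(f)` is `σ_y`-summable. -/
def IsTelescoper (L : ℕ →₀ Polynomial K) (f : Fxy K) : Prop :=
  L ≠ 0 ∧ IsSummableY K (applyA K (ιxOp K L) f)

/-- The degree in `x` of a polynomial in `K[x,y] = K[x][y]`. -/
def degX (r : Rxy K) : ℕ := r.support.sup fun n => (r.coeff n).natDegree

/-- The total degree in `x, y` of a polynomial in `K[x,y] = K[x][y]`. -/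
def degXY (r : Rxy K) : ℕ := r.support.sup fun n => n + (r.coeff n).natDegree

end

noncomputable section

variable (K : Type*) [Field K] [CharZero K]

/-- The element `λx + μy` of `K(x,y)`. -/
def wF (lam μ : ℤ) : Fxy K := (lam : Fxy K) * xF K + (μ : Fxy K) * yF K

/-- The rational function `p(λx + μy) ∈ K(x,y)`, for a univariate polynomial `p ∈ K[z]`. -/
def peF (lam μ : ℤ) (p : Polynomial K) : Fxy K := Polynomial.eval₂ (ιK K) (wF K lam μ) p

/-- The element `λx + μy` of `K[x,y]`. -/
def wR (lam μ : ℤ) : Rxy K :=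
  (lam : Rxy K) * Polynomial.C Polynomial.X + (μ : Rxy K) * Polynomial.X

/-- The polynomial `p(λx + μy) ∈ K[x,y]`, for a univariate polynomial `p ∈ K[z]`. -/
def peR (lam μ : ℤ) (p : Polynomial K) : Rxy K :=
  Polynomial.eval₂ (algebraMap K (Rxy K)) (wR K lam μ) p

end


-- ===================== auxiliary lemmas =====================

section AuxZpow

variable {R : Type*} [CommRing R]

lemma ringAut_zpow_fix (φ : RingAut R) (u : R) (h : φ u = u) : ∀ s : ℤ, (φ ^ s) u = u := by
  intro s
  induction s using Int.induction_on with
  | zero => rfl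
  | succ k ih =>
      rw [zpow_add_one]
      show (φ ^ (k : ℤ)) (φ u) = u
      rw [h, ih]
  | pred k ih =>
      rw [zpow_sub_one]
      show (φ ^ (-k : ℤ)) (φ⁻¹ u) = u
      have h1 : φ⁻¹ u = u := by
        apply φ.injective
        show φ (φ.symm u) = φ u
        rw [φ.apply_symm_apply, h]
      rw [h1, ih]

lemma ringAut_zpow_shift (φ : RingAut R) (u : R) (h : φ u = u + 1) :
    ∀ s : ℤ, (φ ^ s) u = u + (s : ℤ) := by
  intro s
  induction s using Int.induction_on with
  | zero => show u = u + ((0:ℤ):R); simp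
  | succ k ih =>
      rw [zpow_add_one]
      show (φ ^ (k : ℤ)) (φ u) = _
      rw [h, map_add, ih, map_one]
      push_cast; ring
  | pred k ih =>
      rw [zpow_sub_one]
      show (φ ^ (-k : ℤ)) (φ⁻¹ u) = _
      have h1 : φ⁻¹ u = u - 1 := by
        apply φ.injective
        show φ (φ.symm u) = _
        rw [φ.apply_symm_apply, map_sub, h, map_one]
        ring
      rw [h1, map_sub, ih, map_one]
      push_cast; ring

end AuxZpow

section AuxShift

variable (K : Type*) [Field K] [CharZero K]

lemma σxR_CC (a : K) : σxR K (Polynomial.C (Polynomial.C a)) = Polynomial.C (Polynomial.C a) := by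
  simp [σxR, shiftPoly, Polynomial.mapEquiv_apply]

lemma σxR_CX : σxR K (Polynomial.C Polynomial.X) = Polynomial.C Polynomial.X + 1 := by
  simp [σxR, shiftPoly, Polynomial.mapEquiv_apply]

lemma σxR_X : σxR K Polynomial.X = Polynomial.X := by
  simp [σxR, shiftPoly, Polynomial.mapEquiv_apply]

lemma σyR_C (q : Polynomial K) : σyR K (Polynomial.C q) = Polynomial.C q := by
  simp [σyR, shiftPoly]

lemma σyR_X : σyR K Polynomial.X = Polynomial.X + 1 := by
  simp [σyR, shiftPoly]

/-- Action of `σ_x^s σ_y^t` on `p(λx+μy)`. -/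
lemma act_peR (lam μ s t : ℤ) (p : Polynomial K) :
    (σxR K ^ s * σyR K ^ t) (peR K lam μ p)
      = peR K lam μ (p.comp (Polynomial.X + Polynomial.C ((lam * s + μ * t : ℤ) : K))) := by
  set τ : RingAut (Rxy K) := σxR K ^ s * σyR K ^ t with hτ
  have happ : ∀ r : Rxy K, τ r = (σxR K ^ s) ((σyR K ^ t) r) := fun r => rfl
  have hCC : ∀ a : K, τ (Polynomial.C (Polynomial.C a)) = Polynomial.C (Polynomial.C a) := by
    intro a
    rw [happ, ringAut_zpow_fix _ _ (σyR_C K _), ringAut_zpow_fix _ _ (σxR_CC K a)]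
  have hCX : τ (Polynomial.C Polynomial.X) = Polynomial.C Polynomial.X + (s : Rxy K) := by
    rw [happ, ringAut_zpow_fix _ _ (σyR_C K _), ringAut_zpow_shift _ _ (σxR_CX K)]
  have hX : τ (Polynomial.X : Rxy K) = Polynomial.X + (t : Rxy K) := by
    rw [happ, ringAut_zpow_shift _ _ (σyR_X K), map_add, map_intCast,
      ringAut_zpow_fix _ _ (σxR_X K)]
  have hcomp : (τ : Rxy K →+* Rxy K).comp (algebraMap K (Rxy K)) = algebraMap K (Rxy K) := by
    refine RingHom.ext fun a => ?_
    have := hCC a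
    simpa [Polynomial.algebraMap_apply, Polynomial.algebraMap_eq] using this
  have hw : τ (wR K lam μ) = wR K lam μ + ((lam * s + μ * t : ℤ) : Rxy K) := by
    unfold wR
    rw [map_add, map_mul, map_mul, map_intCast, map_intCast, hCX, hX]
    push_cast; ring
  show (τ : Rxy K →+* Rxy K) (peR K lam μ p) = _
  unfold peR
  rw [Polynomial.hom_eval₂, hcomp]
  have : (τ : Rxy K →+* Rxy K) (wR K lam μ) = wR K lam μ + ((lam * s + μ * t : ℤ) : Rxy K) := hw
  rw [this, Polynomial.eval₂_comp]
  congr 1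
  rw [Polynomial.eval₂_add, Polynomial.eval₂_X, Polynomial.eval₂_C, map_intCast]

end AuxShift

section AuxEval

variable (K : Type*) [Field K] [CharZero K]

/-- Evaluation `x ↦ r` as a ring hom `K[x][y] → K[y]`. -/
noncomputable def EvR (r : K) : Rxy K →+* Polynomial K :=
  Polynomial.mapRingHom (Polynomial.evalRingHom r)

lemma EvR_peR (r : K) (lam μ : ℤ) (p : Polynomial K) :
    EvR K r (peR K lam μ p)
      = p.comp (Polynomial.C ((lam : K) * r) + Polynomial.C (μ : K) * Polynomial.X) := by
  unfold peR EvR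
  rw [Polynomial.hom_eval₂]
  have h1 : (Polynomial.mapRingHom (Polynomial.evalRingHom r)).comp (algebraMap K (Rxy K))
      = (Polynomial.C : K →+* Polynomial K) := by
    refine RingHom.ext fun a => ?_
    simp [Polynomial.algebraMap_apply, Polynomial.algebraMap_eq]
  have h2 : (Polynomial.mapRingHom (Polynomial.evalRingHom r)) (wR K lam μ)
      = Polynomial.C ((lam : K) * r) + Polynomial.C (μ : K) * Polynomial.X := by
    unfold wR
    rw [map_add, map_mul, map_mul, map_intCast, map_intCast]
    simp [Polynomial.coe_mapRingHom, mul_comm]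
  rw [h1, h2]
  rfl

/-- A polynomial of positive degree over a char-zero field is not periodic. -/
lemma shift_cancel (P : Polynomial K) (hP : 0 < P.natDegree) (c₁ c₂ : K)
    (h : P.comp (Polynomial.X + Polynomial.C c₁) = P.comp (Polynomial.X + Polynomial.C c₂)) :
    c₁ = c₂ := by
  by_contra hne
  have hd : c₁ - c₂ ≠ 0 := sub_ne_zero.mpr hne
  have key : P.comp (Polynomial.X + Polynomial.C (c₁ - c₂)) = P := by
    have h' := congrArg (fun q => q.comp (Polynomial.X + Polynomial.C (-c₂))) h
    simp only [Polynomial.comp_assoc, Polynomial.add_comp, Polynomial.X_comp,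
      Polynomial.C_comp] at h'
    rw [show Polynomial.X + Polynomial.C (-c₂) + Polynomial.C c₂ = (Polynomial.X : Polynomial K) by
        rw [map_neg]; ring, Polynomial.comp_X] at h'
    rw [show Polynomial.X + Polynomial.C (-c₂) + Polynomial.C c₁
        = Polynomial.X + Polynomial.C (c₁ - c₂) by rw [map_neg, map_sub]; ring] at h'
    exact h'
  have heval : ∀ a : K, P.eval (a + (c₁ - c₂)) = P.eval a := by
    intro a
    have := congrArg (Polynomial.eval a) key
    rwa [Polynomial.eval_comp, Polynomial.eval_add, Polynomial.eval_X, Polynomial.eval_C] at this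
  have hk : ∀ k : ℕ, P.eval ((k : K) * (c₁ - c₂)) = P.eval 0 := by
    intro k
    induction k with
    | zero => simp
    | succ n ih =>
        rw [show ((n + 1 : ℕ) : K) * (c₁ - c₂) = (n : K) * (c₁ - c₂) + (c₁ - c₂) by push_cast; ring,
          heval, ih]
  set Q : Polynomial K := P - Polynomial.C (P.eval 0) with hQ
  have hQ0 : Q = 0 := by
    apply Polynomial.eq_zero_of_infinite_isRoot
    apply Set.Infinite.mono (s := Set.range fun k : ℕ => (k : K) * (c₁ - c₂))
    · rintro x ⟨k, rfl⟩
      show Q.IsRoot _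
      simp [hQ, Polynomial.IsRoot, hk k]
    · apply Set.infinite_range_of_injective
      intro a b hab
      exact Nat.cast_injective (mul_right_cancel₀ hd hab)
  have : P = Polynomial.C (P.eval 0) := by rwa [sub_eq_zero] at hQ0
  rw [this] at hP
  simp at hP

end AuxEval

section AuxInt

lemma int_pair_eq (lam₁ μ₁ lam₂ μ₂ : ℤ) (hμ₁ : 0 < μ₁) (hμ₂ : 0 < μ₂)
    (hcop₁ : IsCoprime lam₁ μ₁) (hcop₂ : IsCoprime lam₂ μ₂)
    (h : lam₁ * μ₂ = lam₂ * μ₁) : lam₁ = lam₂ ∧ μ₁ = μ₂ := by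
  have h12 : μ₁ ∣ μ₂ := hcop₁.symm.dvd_of_dvd_mul_left ⟨lam₂, by linarith⟩
  have h21 : μ₂ ∣ μ₁ := hcop₂.symm.dvd_of_dvd_mul_left ⟨lam₁, by linarith⟩
  have hμ : μ₁ = μ₂ := Int.dvd_antisymm hμ₁.le hμ₂.le h12 h21
  subst hμ
  exact ⟨mul_right_cancel₀ hμ₁.ne' h, rfl⟩

end AuxInt

section AuxMain

variable (K : Type*) [Field K] [CharZero K]

lemma comp_linear_rewrite (lam' μ' : K) (hμ' : μ' ≠ 0) (p : Polynomial K) :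
    p.comp (Polynomial.C lam' + Polynomial.C μ' * Polynomial.X)
      = (p.comp (Polynomial.C μ' * Polynomial.X)).comp
          (Polynomial.X + Polynomial.C (lam' / μ')) := by
  rw [Polynomial.comp_assoc]
  congr 1
  rw [Polynomial.mul_comp, Polynomial.C_comp, Polynomial.X_comp, mul_add, ← map_mul]
  have : μ' * (lam' / μ') = lam' := by field_simp
  rw [this]
  ring

lemma peR_eq (lam₁ μ₁ lam₂ μ₂ : ℤ) (hμ₁ : 0 < μ₁) (hμ₂ : 0 < μ₂)
    (hcop₁ : IsCoprime lam₁ μ₁) (hcop₂ : IsCoprime lam₂ μ₂)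
    (p₁ p₂ : Polynomial K) (hp₁ : 0 < p₁.natDegree)
    (h : peR K lam₁ μ₁ p₁ = peR K lam₂ μ₂ p₂) :
    lam₁ = lam₂ ∧ μ₁ = μ₂ ∧ p₁ = p₂ := by
  have hμ₁K : (μ₁ : K) ≠ 0 := Int.cast_ne_zero.mpr hμ₁.ne'
  have hμ₂K : (μ₂ : K) ≠ 0 := Int.cast_ne_zero.mpr hμ₂.ne'
  have h0 := congrArg (EvR K 0) h
  have h1 := congrArg (EvR K 1) h
  rw [EvR_peR, EvR_peR] at h0 h1
  simp only [mul_zero, map_zero, zero_add] at h0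
  simp only [mul_one] at h1
  rw [comp_linear_rewrite K _ _ hμ₁K, comp_linear_rewrite K _ _ hμ₂K, ← h0] at h1
  have hdeg : 0 < (p₁.comp (Polynomial.C (μ₁ : K) * Polynomial.X)).natDegree := by
    rw [Polynomial.natDegree_comp, Polynomial.natDegree_C_mul_X _ hμ₁K, mul_one]
    exact hp₁
  have hc := shift_cancel K _ hdeg _ _ h1
  have hcross : (lam₁ : K) * μ₂ = lam₂ * μ₁ := (div_eq_div_iff hμ₁K hμ₂K).mp hc
  have hcrossZ : lam₁ * μ₂ = lam₂ * μ₁ := by exact_mod_cast hcross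
  obtain ⟨hl, hm⟩ := int_pair_eq lam₁ μ₁ lam₂ μ₂ hμ₁ hμ₂ hcop₁ hcop₂ hcrossZ
  refine ⟨hl, hm, ?_⟩
  subst hm
  have hinj := congrArg (fun q => q.comp (Polynomial.C ((μ₁ : K))⁻¹ * Polynomial.X)) h0
  simp only [Polynomial.comp_assoc] at hinj
  have hX : (Polynomial.C (μ₁ : K) * Polynomial.X).comp
        (Polynomial.C ((μ₁ : K))⁻¹ * Polynomial.X) = Polynomial.X := by
    rw [Polynomial.mul_comp, Polynomial.C_comp, Polynomial.X_comp, ← mul_assoc, ← map_mul,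
      mul_inv_cancel₀ hμ₁K]
    simp
  rw [hX] at hinj
  simpa using hinj

lemma aeval_intShift (ℓ : ℤ) (p : Polynomial K) :
    Polynomial.aeval (Polynomial.X + (ℓ : Polynomial K)) p
      = p.comp (Polynomial.X + Polynomial.C ((ℓ : ℤ) : K)) := by
  rw [Polynomial.aeval_def, Polynomial.algebraMap_eq, Polynomial.C_eq_intCast]
  rfl

end AuxMain

/-- shift-equivalence of integer-linear polynomials.
Let `f = p_1(λ_1 x + μ_1 y)` and `g = p_2(λ_2 x + μ_2 y)` be integer-linear polynomials
in `K[x,y]`, where `p_1, p_2 ∈ K[z]` have positive degree, `λ_i, μ_i` are integers with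
`μ_i > 0` and `gcd(λ_i, μ_i) = 1`.  Then `f ∼_{x,y} g` if and only if
`(λ_1, μ_1) = (λ_2, μ_2)` and `p_1(z) = p_2(z + ℓ)` for some integer `ℓ`. -/
theorem statement19 (K : Type*) [Field K] [CharZero K]
    (lam₁ μ₁ lam₂ μ₂ : ℤ) (hμ₁ : 0 < μ₁) (hμ₂ : 0 < μ₂)
    (hcop₁ : IsCoprime lam₁ μ₁) (hcop₂ : IsCoprime lam₂ μ₂)
    (p₁ p₂ : Polynomial K) (hp₁ : 0 < p₁.natDegree) (hp₂ : 0 < p₂.natDegree) :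
    (∃ s t : ℤ,
        peR K lam₁ μ₁ p₁ = (σxR K ^ s * σyR K ^ t) (peR K lam₂ μ₂ p₂)) ↔
      ((lam₁, μ₁) = (lam₂, μ₂) ∧
        ∃ ℓ : ℤ, p₁ = Polynomial.aeval (Polynomial.X + (ℓ : Polynomial K)) p₂) := by
  constructor
  · rintro ⟨s, t, h⟩
    rw [act_peR] at h
    obtain ⟨hl, hm, hp⟩ := peR_eq K lam₁ μ₁ lam₂ μ₂ hμ₁ hμ₂ hcop₁ hcop₂ p₁ _ hp₁ h
    refine ⟨by rw [hl, hm], lam₂ * s + μ₂ * t, ?_⟩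
    rw [hp, aeval_intShift]
  · rintro ⟨hpair, ℓ, hp⟩
    have hl : lam₁ = lam₂ := congrArg Prod.fst hpair
    have hm : μ₁ = μ₂ := congrArg Prod.snd hpair
    subst hl; subst hm
    obtain ⟨a, b, hab⟩ := hcop₁
    refine ⟨a * ℓ, b * ℓ, ?_⟩
    rw [act_peR, show lam₁ * (a * ℓ) + μ₁ * (b * ℓ) = ℓ from by linear_combination ℓ * hab,
      hp, aeval_intShift]
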